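/- Let α, β, γ ≥ 0 with α > 0, β ≤ 4α, and γ ≥ A e + α + β²/(8α) for some A with 0 < A ≤ 1. Let θ ∈ (0,2π), m ≥ 1, r = exp(e^{iθ}), s = m e^{iθ} r, and t, u ∈ ℂ satisfy Re(1 + t/s) ≥ m(1 + cos θ) and Re(u/s) ≥ m cos 2θ with cos 2θ ≥ 0. Then |α u + β t + γ s| ≥ A. -/

import Mathlib

set_option maxHeartbeats 1000000
open Real Complex

theorem stmt_8 (A α β γ θ m : ℝ)
    (hA : 0 < A) (hA1 : A ≤ 1) (hα : 0 < α) (hβ : 0 ≤ β) (hβα : β ≤ 4 * α)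
    (hγ : A * Real.exp 1 + α + β ^ 2 / (8 * α) ≤ γ)
    (hθ : θ ∈ Set.Ioo 0 (2 * Real.pi)) (hcos : 0 ≤ Real.cos (2 * θ)) (hm : 1 ≤ m)
    (r s t u : ℂ)
    (hr : r = Complex.exp (Complex.exp (θ * Complex.I)))
    (hs : s = (m : ℂ) * Complex.exp (θ * Complex.I) * r)
    (hs0 : s ≠ 0)
    (ht : m * (1 + Real.cos θ) ≤ (1 + t / s).re)
    (hu : m * Real.cos (2 * θ) ≤ (u / s).re) :
    A ≤ ‖(α : ℂ) * u + (β : ℂ) * t + (γ : ℂ) * s‖ := by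
  have hm0 : (0:ℝ) < m := lt_of_lt_of_le one_pos hm
  set c := Real.cos θ with hc
  have hc1 : -1 ≤ c := Real.neg_one_le_cos θ
  have hc1' : c ≤ 1 := Real.cos_le_one θ
  have hcos2 : Real.cos (2 * θ) = 2 * c ^ 2 - 1 := by
    rw [Real.cos_two_mul]
  -- |s| = m * exp c
  have habs_s : ‖s‖ = m * Real.exp c := by
    rw [hs, hr]
    rw [norm_mul, norm_mul, Complex.norm_exp, Complex.norm_exp]
    have h1 : ((θ:ℂ) * Complex.I).re = 0 := by simp
    have h2 : (Complex.exp ((θ:ℂ) * Complex.I)).re = c :=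
      Complex.exp_ofReal_mul_I_re θ
    rw [h1, h2, Real.exp_zero, Complex.norm_real, Real.norm_eq_abs, abs_of_pos hm0, mul_one]
  -- rewrite expression
  have hE : (α : ℂ) * u + (β : ℂ) * t + (γ : ℂ) * s
      = s * ((α:ℂ) * (u/s) + (β:ℂ) * (t/s) + (γ:ℂ)) := by
    field_simp
  rw [hE, norm_mul, habs_s]
  -- lower bound via real part
  have hre : ((α:ℂ) * (u/s) + (β:ℂ) * (t/s) + (γ:ℂ)).re
      = α * (u/s).re + β * (t/s).re + γ := by
    simp [Complex.add_re, Complex.mul_re]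
  have hle : α * (u/s).re + β * (t/s).re + γ
      ≤ ‖(α:ℂ) * (u/s) + (β:ℂ) * (t/s) + (γ:ℂ)‖ := by
    rw [← hre]; exact Complex.re_le_norm _
  have ht' : m * (1 + c) - 1 ≤ (t / s).re := by
    have : (1 + t/s).re = 1 + (t/s).re := by simp
    rw [this] at ht; linarith
  have hu' : m * (2 * c ^ 2 - 1) ≤ (u / s).re := by rw [hcos2] at hu; exact hu
  -- real inequality
  have hexp1 : (1:ℝ) ≤ Real.exp c * Real.exp 1 := by
    rw [← Real.exp_add]
    exact Real.one_le_exp (by linarith)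
  have hc2 : 0 ≤ 2 * c ^ 2 - 1 := by rw [← hcos2]; exact hcos
  have hβ2 : β ^ 2 ≤ 8 * α * (γ - A * Real.exp 1 - α) := by
    have h8 : (0:ℝ) < 8 * α := by linarith
    rw [← div_le_iff₀' h8]
    linarith
  have key : A * Real.exp 1 ≤ 2 * α * c ^ 2 + β * c + γ - α := by
    nlinarith [sq_nonneg (4 * α * c + β)]
  have hm1 : α * (2 * c ^ 2 - 1) ≤ α * (m * (2 * c ^ 2 - 1)) := by
    have : α * (2 * c ^ 2 - 1) * 1 ≤ α * (2 * c ^ 2 - 1) * m :=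
      mul_le_mul_of_nonneg_left hm (mul_nonneg hα.le hc2)
    linarith [this]
  have hm2 : β * (1 + c) ≤ β * (m * (1 + c)) := by
    have : β * (1 + c) * 1 ≤ β * (1 + c) * m :=
      mul_le_mul_of_nonneg_left hm (mul_nonneg hβ (by linarith : (0:ℝ) ≤ 1 + c))
    linarith [this]
  have hB : A * Real.exp 1 ≤ α * (m * (2 * c ^ 2 - 1)) + β * (m * (1 + c) - 1) + γ := by
    nlinarith [key, hm1, hm2]
  have hB' : A * Real.exp 1 ≤ α * (u/s).re + β * (t/s).re + γ := by
    have h1 : α * (m * (2 * c ^ 2 - 1)) ≤ α * (u/s).re :=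
      mul_le_mul_of_nonneg_left hu' hα.le
    have h2 : β * (m * (1 + c) - 1) ≤ β * (t/s).re :=
      mul_le_mul_of_nonneg_left ht' hβ
    linarith
  have hexpc : (0:ℝ) < Real.exp c := Real.exp_pos c
  have hAe : 0 < A * Real.exp 1 := mul_pos hA (Real.exp_pos 1)
  calc A = A * 1 := (mul_one A).symm
    _ ≤ A * (Real.exp c * Real.exp 1) := by nlinarith
    _ = Real.exp c * (A * Real.exp 1) := by ring
    _ ≤ Real.exp c * (α * (u/s).re + β * (t/s).re + γ) :=
        mul_le_mul_of_nonneg_left hB' hexpc.le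
    _ ≤ (m * Real.exp c) * (α * (u/s).re + β * (t/s).re + γ) := by
        have hX0 : 0 ≤ α * (u/s).re + β * (t/s).re + γ := le_trans hAe.le hB'
        have h1 : Real.exp c ≤ m * Real.exp c := by
          nlinarith
        exact mul_le_mul_of_nonneg_right h1 hX0
    _ ≤ (m * Real.exp c) * ‖(α:ℂ) * (u/s) + (β:ℂ) * (t/s) + (γ:ℂ)‖ := by
        apply mul_le_mul_of_nonneg_left hle (by positivity)
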